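/- arXiv:1207.3650 — 11 statements merged into one kernel-verified Lean document; each statement's English description precedes it below -/
import Mathlib

section
/- If ζ = (ζ_r)_{r∈𝓡} is a max-min fair allocation for the state x, then for every route r with x_r > 0 one has ζ_r ≥ ζ^min_r(x) = min_{ℓ∈r} C_ℓ/X_ℓ; that is, the min policy is sub-optimal with respect to max-min fairness in every state. -/
/-- If `ζ` is a max-min fair allocation for the state `x` of a
best-effort network, then for every route `r` with `x_r > 0` one has
`ζ_r ≥ ζ^min_r(x) = min_{ℓ ∈ r} C_ℓ / X_ℓ`: the min policy is sub-optimal with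
respect to max-min fairness in every state. Here `X_ℓ = ∑_{r ∋ ℓ} x_r`, and a
max-min fair allocation is a nonnegative vector `ζ` satisfying the capacity
constraints `∑_{r ∋ ℓ} x_r ζ_r ≤ C_ℓ` such that every route `r` with `x_r > 0`
has a link `ℓ ∈ r` with `∑_{r' ∋ ℓ} x_{r'} ζ_{r'} = C_ℓ` and
`ζ_r = max_{r' ∋ ℓ, x_{r'} > 0} ζ_{r'}`. -/
theorem statement_1 {L R : Type*} [Fintype L] [Fintype R] [DecidableEq L]
    (route : R → Finset L) (hroute : ∀ r, (route r).Nonempty)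
    (C : L → ℝ) (hC : ∀ ℓ, 0 < C ℓ)
    (x : R → ℕ)
    (ζ : R → ℝ) (hζnonneg : ∀ r, 0 ≤ ζ r)
    (hcap : ∀ ℓ, ∑ r ∈ Finset.univ.filter (fun r => ℓ ∈ route r), (x r : ℝ) * ζ r ≤ C ℓ)
    (hfair : ∀ r, ∀ hr : 0 < x r, ∃ ℓ, ∃ hℓ : ℓ ∈ route r,
      (∑ r' ∈ Finset.univ.filter (fun r' => ℓ ∈ route r'), (x r' : ℝ) * ζ r' = C ℓ) ∧
      ζ r = (Finset.univ.filter (fun r' => ℓ ∈ route r' ∧ 0 < x r')).sup'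
              ⟨r, Finset.mem_filter.mpr ⟨Finset.mem_univ r, hℓ, hr⟩⟩ ζ) :
    ∀ r, 0 < x r →
      (route r).inf' (hroute r)
          (fun ℓ => C ℓ /
            (∑ r' ∈ Finset.univ.filter (fun r' => ℓ ∈ route r'), (x r' : ℝ))) ≤ ζ r := by
  intro r hr
  obtain ⟨ℓ, hℓ, hsum, hmax⟩ := hfair r hr
  have hXpos : (0:ℝ) < ∑ r' ∈ Finset.univ.filter (fun r' => ℓ ∈ route r'), (x r' : ℝ) := by
    apply Finset.sum_pos'
    · intro i _; positivity
    · exact ⟨r, Finset.mem_filter.mpr ⟨Finset.mem_univ r, hℓ⟩, by exact_mod_cast hr⟩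
  have key : C ℓ ≤ (∑ r' ∈ Finset.univ.filter (fun r' => ℓ ∈ route r'), (x r' : ℝ)) * ζ r := by
    rw [← hsum, Finset.sum_mul]
    apply Finset.sum_le_sum
    intro i hi
    rcases Nat.eq_zero_or_pos (x i) with h0 | hpos
    · simp [h0]
    · have hi' : i ∈ Finset.univ.filter (fun r' => ℓ ∈ route r' ∧ 0 < x r') := by
        simp only [Finset.mem_filter, Finset.mem_univ, true_and] at hi ⊢
        exact ⟨hi, hpos⟩
      have : ζ i ≤ ζ r := hmax ▸ Finset.le_sup' ζ hi'
      exact mul_le_mul_of_nonneg_left this (by positivity)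
  calc (route r).inf' (hroute r)
          (fun ℓ => C ℓ / (∑ r' ∈ Finset.univ.filter (fun r' => ℓ ∈ route r'), (x r' : ℝ)))
      ≤ C ℓ / (∑ r' ∈ Finset.univ.filter (fun r' => ℓ ∈ route r'), (x r' : ℝ)) :=
        Finset.inf'_le _ hℓ
    _ ≤ ζ r := (div_le_iff₀ hXpos).mpr (key.trans_eq (mul_comm _ _))
end

section
/- Let x and x' be two states of a best-effort network with X_ℓ ≤ X'_ℓ for every link ℓ, and let ζ be a max-min fair allocation for the state x. Then for every route r with x_r > 0, ζ_r ≥ min_{ℓ∈r} C_ℓ/X'_ℓ; i.e., the max-min rate in the smaller state dominates the min-policy rate in the larger state. (This is the key monotonicity inequality underlying the coupling proof that the process under the max-min allocation is stochastically smaller than under the min allocation.) -/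
/-- Let `x` and `x'` be two states of a best-effort network with
`X_ℓ ≤ X'_ℓ` for every link `ℓ` (where `X_ℓ = ∑_{r ∋ ℓ} x_r`), and let `ζ` be a
max-min fair allocation for the state `x`. Then for every route `r` with `x_r > 0`,
`ζ_r ≥ min_{ℓ ∈ r} C_ℓ / X'_ℓ`: the max-min rate in the smaller state dominates the
min-policy rate in the larger state. -/
theorem statement_2 {L R : Type*} [Fintype L] [Fintype R] [DecidableEq L]
    (route : R → Finset L) (hroute : ∀ r, (route r).Nonempty)
    (C : L → ℝ) (hC : ∀ ℓ, 0 < C ℓ)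
    (x x' : R → ℕ)
    (hmono : ∀ ℓ, (∑ r ∈ Finset.univ.filter (fun r => ℓ ∈ route r), x r) ≤
                  (∑ r ∈ Finset.univ.filter (fun r => ℓ ∈ route r), x' r))
    (ζ : R → ℝ) (hζnonneg : ∀ r, 0 ≤ ζ r)
    (hcap : ∀ ℓ, ∑ r ∈ Finset.univ.filter (fun r => ℓ ∈ route r), (x r : ℝ) * ζ r ≤ C ℓ)
    (hfair : ∀ r, ∀ hr : 0 < x r, ∃ ℓ, ∃ hℓ : ℓ ∈ route r,
      (∑ r' ∈ Finset.univ.filter (fun r' => ℓ ∈ route r'), (x r' : ℝ) * ζ r' = C ℓ) ∧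
      ζ r = (Finset.univ.filter (fun r' => ℓ ∈ route r' ∧ 0 < x r')).sup'
              ⟨r, Finset.mem_filter.mpr ⟨Finset.mem_univ r, hℓ, hr⟩⟩ ζ) :
    ∀ r, 0 < x r →
      (route r).inf' (hroute r)
          (fun ℓ => C ℓ /
            (∑ r' ∈ Finset.univ.filter (fun r' => ℓ ∈ route r'), (x' r' : ℝ))) ≤ ζ r := by
  intro r hr
  obtain ⟨ℓ, hℓ, hsat, hmax⟩ := hfair r hr
  set S := Finset.univ.filter (fun r' => ℓ ∈ route r') with hS
  have hrS : r ∈ S := Finset.mem_filter.mpr ⟨Finset.mem_univ r, hℓ⟩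
  have hX : 0 < (∑ r' ∈ S, (x r' : ℝ)) := by
    have : 0 < ∑ r' ∈ S, x r' :=
      Finset.sum_pos' (fun _ _ => Nat.zero_le _) ⟨r, hrS, hr⟩
    exact_mod_cast this
  have hX' : (∑ r' ∈ S, (x r' : ℝ)) ≤ (∑ r' ∈ S, (x' r' : ℝ)) := by
    exact_mod_cast hmono ℓ
  have hX'pos : 0 < (∑ r' ∈ S, (x' r' : ℝ)) := lt_of_lt_of_le hX hX'
  -- C ℓ ≤ (Σ x) * ζ r
  have hbound : C ℓ ≤ (∑ r' ∈ S, (x r' : ℝ)) * ζ r := by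
    rw [← hsat, Finset.sum_mul]
    refine Finset.sum_le_sum fun r' hr' => ?_
    rcases Nat.eq_zero_or_pos (x r') with h0 | hpos
    · simp [h0]
    · have hmem : r' ∈ Finset.univ.filter (fun r'' => ℓ ∈ route r'' ∧ 0 < x r'') :=
        Finset.mem_filter.mpr ⟨Finset.mem_univ r', (Finset.mem_filter.mp hr').2, hpos⟩
      have : ζ r' ≤ ζ r := hmax ▸ Finset.le_sup' ζ hmem
      exact mul_le_mul_of_nonneg_left this (Nat.cast_nonneg _)
  have h1 : C ℓ / (∑ r' ∈ S, (x' r' : ℝ)) ≤ ζ r := by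
    rw [div_le_iff₀ hX'pos]
    calc C ℓ ≤ (∑ r' ∈ S, (x r' : ℝ)) * ζ r := hbound
      _ ≤ (∑ r' ∈ S, (x' r' : ℝ)) * ζ r :=
        mul_le_mul_of_nonneg_right hX' (hζnonneg r)
      _ = ζ r * (∑ r' ∈ S, (x' r' : ℝ)) := mul_comm _ _
  exact le_trans (Finset.inf'_le _ hℓ) h1
end

section
/- For every state x of a best-effort network, the max-min fair allocation is unique on active routes: if ζ and ζ' are both max-min fair allocations for x, then ζ_r = ζ'_r for every route r with x_r > 0. -/
/-- Auxiliary: if `r0` is an active route with `ζ r0 < ζ' r0` minimizing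
`min (ζ r) (ζ' r)` among active routes where the allocations differ, we get a
contradiction. -/
lemma statement_3_aux {L R : Type*} [Fintype L] [Fintype R] [DecidableEq L]
    (route : R → Finset L) (C : L → ℝ)
    (x : R → ℕ) (ζ ζ' : R → ℝ)
    (hcap' : ∀ ℓ, ∑ r ∈ Finset.univ.filter (fun r => ℓ ∈ route r), (x r : ℝ) * ζ' r ≤ C ℓ)
    (hfair : ∀ r, ∀ hr : 0 < x r, ∃ ℓ, ∃ hℓ : ℓ ∈ route r,
      (∑ r' ∈ Finset.univ.filter (fun r' => ℓ ∈ route r'), (x r' : ℝ) * ζ r' = C ℓ) ∧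
      ζ r = (Finset.univ.filter (fun r' => ℓ ∈ route r' ∧ 0 < x r')).sup'
              ⟨r, Finset.mem_filter.mpr ⟨Finset.mem_univ r, hℓ, hr⟩⟩ ζ)
    (r0 : R) (hr0 : 0 < x r0) (hlt : ζ r0 < ζ' r0)
    (hmin : ∀ r', 0 < x r' → ζ r' ≠ ζ' r' →
      min (ζ r0) (ζ' r0) ≤ min (ζ r') (ζ' r')) : False := by
  obtain ⟨ℓ, hℓ, hsat, hmax⟩ := hfair r0 hr0
  -- every active route through ℓ has ζ ≤ ζ'
  have hkey : ∀ r', ℓ ∈ route r' → 0 < x r' → ζ r' ≤ ζ' r' := by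
    intro r' hℓ' hx'
    by_contra h
    push_neg at h
    have hle : ζ r' ≤ ζ r0 := by
      rw [hmax]
      exact Finset.le_sup' ζ (Finset.mem_filter.mpr ⟨Finset.mem_univ r', hℓ', hx'⟩)
    have := hmin r' hx' (by linarith)
    rw [min_eq_left hlt.le, min_eq_right h.le] at this
    linarith
  -- strict inequality on the sum over link ℓ
  have hsum : ∑ r' ∈ Finset.univ.filter (fun r' => ℓ ∈ route r'), (x r' : ℝ) * ζ r' <
      ∑ r' ∈ Finset.univ.filter (fun r' => ℓ ∈ route r'), (x r' : ℝ) * ζ' r' := by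
    apply Finset.sum_lt_sum
    · intro r' hr'
      rcases Nat.eq_zero_or_pos (x r') with h0 | hpos
      · simp [h0]
      · have hℓ' := (Finset.mem_filter.mp hr').2
        exact mul_le_mul_of_nonneg_left (hkey r' hℓ' hpos) (Nat.cast_nonneg _)
    · refine ⟨r0, Finset.mem_filter.mpr ⟨Finset.mem_univ r0, hℓ⟩, ?_⟩
      have : (0 : ℝ) < (x r0 : ℝ) := by exact_mod_cast hr0
      exact mul_lt_mul_of_pos_left hlt this
  rw [hsat] at hsum
  exact absurd (hcap' ℓ) (not_le.mpr hsum)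

/-- For every state `x` of a best-effort network, the max-min fair
allocation is unique on active routes: if `ζ` and `ζ'` are both max-min fair
allocations for `x`, then `ζ_r = ζ'_r` for every route `r` with `x_r > 0`. -/
theorem statement_3 {L R : Type*} [Fintype L] [Fintype R] [DecidableEq L]
    (route : R → Finset L) (hroute : ∀ r, (route r).Nonempty)
    (C : L → ℝ) (hC : ∀ ℓ, 0 < C ℓ)
    (x : R → ℕ)
    (ζ ζ' : R → ℝ)
    (hζnonneg : ∀ r, 0 ≤ ζ r) (hζ'nonneg : ∀ r, 0 ≤ ζ' r)
    (hcap : ∀ ℓ, ∑ r ∈ Finset.univ.filter (fun r => ℓ ∈ route r), (x r : ℝ) * ζ r ≤ C ℓ)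
    (hcap' : ∀ ℓ, ∑ r ∈ Finset.univ.filter (fun r => ℓ ∈ route r), (x r : ℝ) * ζ' r ≤ C ℓ)
    (hfair : ∀ r, ∀ hr : 0 < x r, ∃ ℓ, ∃ hℓ : ℓ ∈ route r,
      (∑ r' ∈ Finset.univ.filter (fun r' => ℓ ∈ route r'), (x r' : ℝ) * ζ r' = C ℓ) ∧
      ζ r = (Finset.univ.filter (fun r' => ℓ ∈ route r' ∧ 0 < x r')).sup'
              ⟨r, Finset.mem_filter.mpr ⟨Finset.mem_univ r, hℓ, hr⟩⟩ ζ)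
    (hfair' : ∀ r, ∀ hr : 0 < x r, ∃ ℓ, ∃ hℓ : ℓ ∈ route r,
      (∑ r' ∈ Finset.univ.filter (fun r' => ℓ ∈ route r'), (x r' : ℝ) * ζ' r' = C ℓ) ∧
      ζ' r = (Finset.univ.filter (fun r' => ℓ ∈ route r' ∧ 0 < x r')).sup'
              ⟨r, Finset.mem_filter.mpr ⟨Finset.mem_univ r, hℓ, hr⟩⟩ ζ') :
    ∀ r, 0 < x r → ζ r = ζ' r := by
  by_contra h
  push_neg at h
  obtain ⟨r1, hx1, hne1⟩ := h
  classical
  have hSne : (Finset.univ.filter (fun r => 0 < x r ∧ ζ r ≠ ζ' r)).Nonempty :=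
    ⟨r1, Finset.mem_filter.mpr ⟨Finset.mem_univ r1, hx1, hne1⟩⟩
  obtain ⟨r0, hr0mem, hr0min⟩ := Finset.exists_min_image _
    (fun r => min (ζ r) (ζ' r)) hSne
  obtain ⟨-, hx0, hne0⟩ := Finset.mem_filter.mp hr0mem
  have hmin : ∀ r', 0 < x r' → ζ r' ≠ ζ' r' →
      min (ζ r0) (ζ' r0) ≤ min (ζ r') (ζ' r') := fun r' hx' hne' =>
    hr0min r' (Finset.mem_filter.mpr ⟨Finset.mem_univ r', hx', hne'⟩)
  rcases lt_or_gt_of_ne hne0 with hlt | hgt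
  · exact statement_3_aux route C x ζ ζ' hcap' hfair r0 hx0 hlt hmin
  · exact statement_3_aux route C x ζ' ζ hcap hfair' r0 hx0 hgt
      (fun r' hx' hne' => by rw [min_comm (ζ' r0), min_comm (ζ' r')]
                             exact hmin r' hx' (Ne.symm hne'))
end

section
/- Let x be a nonzero state of a best-effort network with traffic parameters (λ_r, σ_r) and ρ_M > 0. Then for every route r with x_r > 0, the service rate under the min policy satisfies (x_r/σ_r) · min_{ℓ∈r} C_ℓ/X_ℓ ≥ (λ_r/ρ_M) · x*_r/x*_M, where x*_r := x_r/(λ_r σ_r) and x*_M := max_{r'} x*_{r'}. (The proof uses X_ℓ = Σ_{r∋ℓ} λ_r σ_r x*_r ≤ ρ_ℓ C_ℓ max_{r∋ℓ} x*_r ≤ ρ_M C_ℓ x*_M.) -/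
/-- Let `x` be a nonzero state of a best-effort network with traffic
parameters `(λ_r, σ_r)` and `ρ_M > 0` (where `ρ_ℓ = (1/C_ℓ) ∑_{r ∋ ℓ} λ_r σ_r` and
`ρ_M = max_ℓ ρ_ℓ`). Then for every route `r` with `x_r > 0`, the service rate under
the min policy satisfies
`(x_r/σ_r) · min_{ℓ ∈ r} C_ℓ/X_ℓ ≥ (λ_r/ρ_M) · x*_r/x*_M`,
where `x*_r = x_r/(λ_r σ_r)` and `x*_M = max_{r'} x*_{r'}`. -/
theorem statement_4 {L R : Type*} [Fintype L] [Fintype R] [Nonempty L] [Nonempty R]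
    [DecidableEq L]
    (route : R → Finset L) (hroute : ∀ r, (route r).Nonempty)
    (C : L → ℝ) (hC : ∀ ℓ, 0 < C ℓ)
    (lam σ : R → ℝ) (hlam : ∀ r, 0 < lam r) (hσ : ∀ r, 0 < σ r)
    (x : R → ℕ) (hx : ∃ r, 0 < x r)
    (ρM : ℝ)
    (hρM : ρM = Finset.univ.sup' Finset.univ_nonempty
      (fun ℓ => (1 / C ℓ) * ∑ r ∈ Finset.univ.filter (fun r => ℓ ∈ route r), lam r * σ r))
    (hρMpos : 0 < ρM)
    (xstar : R → ℝ) (hxstar : ∀ r, xstar r = (x r : ℝ) / (lam r * σ r))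
    (xM : ℝ) (hxM : xM = Finset.univ.sup' Finset.univ_nonempty xstar) :
    ∀ r, 0 < x r →
      (lam r / ρM) * (xstar r / xM) ≤
        ((x r : ℝ) / σ r) *
          (route r).inf' (hroute r)
            (fun ℓ => C ℓ /
              (∑ r' ∈ Finset.univ.filter (fun r' => ℓ ∈ route r'), (x r' : ℝ))) := by
  intro r hr
  -- xM is positive
  obtain ⟨r0, hr0⟩ := hx
  have hxM0 : 0 < xM := by
    rw [hxM]
    refine lt_of_lt_of_le ?_ (Finset.le_sup' xstar (Finset.mem_univ r0))
    rw [hxstar]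
    have h0 : (0:ℝ) < x r0 := by exact_mod_cast hr0
    have h1 := hlam r0
    have h2 := hσ r0
    positivity
  -- key bound for each link
  have key : ∀ ℓ ∈ route r,
      1 / (ρM * xM) ≤ C ℓ /
        (∑ r' ∈ Finset.univ.filter (fun r' => ℓ ∈ route r'), (x r' : ℝ)) := by
    intro ℓ hℓ
    set X : ℝ := ∑ r' ∈ Finset.univ.filter (fun r' => ℓ ∈ route r'), (x r' : ℝ) with hX
    have hmem : r ∈ Finset.univ.filter (fun r' => ℓ ∈ route r') := by
      simp [hℓ]
    have hXpos : 0 < X := by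
      refine Finset.sum_pos' (fun i _ => by positivity) ⟨r, hmem, by exact_mod_cast hr⟩
    have hρℓ : (1 / C ℓ) * ∑ r' ∈ Finset.univ.filter (fun r' => ℓ ∈ route r'),
        lam r' * σ r' ≤ ρM := by
      rw [hρM]
      exact Finset.le_sup' (fun ℓ => (1 / C ℓ) * ∑ r' ∈ Finset.univ.filter
        (fun r' => ℓ ∈ route r'), lam r' * σ r') (Finset.mem_univ ℓ)
    have hsum : ∑ r' ∈ Finset.univ.filter (fun r' => ℓ ∈ route r'),
        lam r' * σ r' ≤ ρM * C ℓ := by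
      rw [one_div, inv_mul_le_iff₀ (hC ℓ)] at hρℓ
      linarith [mul_comm (C ℓ) ρM]
    have hXle : X ≤ ρM * C ℓ * xM := by
      have h1 : X ≤ (∑ r' ∈ Finset.univ.filter (fun r' => ℓ ∈ route r'),
          lam r' * σ r') * xM := by
        rw [Finset.sum_mul]
        refine Finset.sum_le_sum (fun i _ => ?_)
        have hxi : xstar i ≤ xM := by
          rw [hxM]; exact Finset.le_sup' xstar (Finset.mem_univ i)
        have hls : 0 < lam i * σ i := mul_pos (hlam i) (hσ i)
        have := mul_le_mul_of_nonneg_left hxi (le_of_lt hls)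
        rw [hxstar, mul_div_cancel₀ _ (ne_of_gt hls)] at this
        linarith
      calc X ≤ _ := h1
        _ ≤ ρM * C ℓ * xM := mul_le_mul_of_nonneg_right hsum (le_of_lt hxM0)
    have h2 : C ℓ / (ρM * C ℓ * xM) ≤ C ℓ / X :=
      div_le_div_of_nonneg_left (le_of_lt (hC ℓ)) hXpos hXle
    have h3 : C ℓ / (ρM * C ℓ * xM) = 1 / (ρM * xM) := by
      rw [show ρM * C ℓ * xM = C ℓ * (ρM * xM) by ring, ← div_div,
        div_self (hC ℓ).ne', one_div]
    linarith [h2, h3.ge]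
  have hinf : 1 / (ρM * xM) ≤ (route r).inf' (hroute r)
      (fun ℓ => C ℓ /
        (∑ r' ∈ Finset.univ.filter (fun r' => ℓ ∈ route r'), (x r' : ℝ))) :=
    Finset.le_inf' _ _ key
  have hLHS : (lam r / ρM) * (xstar r / xM) = ((x r : ℝ) / σ r) * (1 / (ρM * xM)) := by
    rw [hxstar]
    have hl := (hlam r).ne'
    have hs := (hσ r).ne'
    have hρ := hρMpos.ne'
    have hxm := hxM0.ne'
    field_simp
  rw [hLHS]
  have hs := hσ r
  exact mul_le_mul_of_nonneg_left hinf (by positivity)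
end

section
/- Let x be a nonzero state of a best-effort network with ρ_M > 0, let γ_r > 1 for each route r, let D := Σ_r (λ_r + (x_r/σ_r) min_{ℓ∈r} C_ℓ/X_ℓ) (with the convention that the service term is 0 when x_r = 0). Then the expected one-step change of the Lyapunov function f(x) = Σ_r Σ_{1≤k≤x_r} γ_r^k under the embedded jump chain of the min policy satisfies Σ_r ( γ_r^{x_r+1} λ_r/D − γ_r^{x_r} (x_r/σ_r) min_{ℓ∈r}(C_ℓ/X_ℓ) / D ) ≤ Σ_r (λ_r/(ρ_M D)) γ_r^{x_r} ( ρ_M γ_r − x*_r/x*_M ). -/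
/-- Let `x` be a nonzero state of a best-effort network with
`ρ_M > 0`, let `γ_r > 1` for each route `r`, and let
`D = ∑_r (λ_r + (x_r/σ_r) min_{ℓ ∈ r} C_ℓ/X_ℓ)` (the service term vanishes
automatically when `x_r = 0`). Then the expected one-step change of the Lyapunov
function `f(x) = ∑_r ∑_{1 ≤ k ≤ x_r} γ_r^k` under the embedded jump chain of the
min policy satisfies
`∑_r (γ_r^{x_r+1} λ_r/D − γ_r^{x_r} (x_r/σ_r) min_{ℓ ∈ r}(C_ℓ/X_ℓ)/D)
  ≤ ∑_r (λ_r/(ρ_M D)) γ_r^{x_r} (ρ_M γ_r − x*_r/x*_M)`. -/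
theorem statement_5 {L R : Type*} [Fintype L] [Fintype R] [Nonempty L] [Nonempty R]
    [DecidableEq L]
    (route : R → Finset L) (hroute : ∀ r, (route r).Nonempty)
    (C : L → ℝ) (hC : ∀ ℓ, 0 < C ℓ)
    (lam σ : R → ℝ) (hlam : ∀ r, 0 < lam r) (hσ : ∀ r, 0 < σ r)
    (x : R → ℕ) (hx : ∃ r, 0 < x r)
    (γ : R → ℝ) (hγ : ∀ r, 1 < γ r)
    (ρM : ℝ)
    (hρM : ρM = Finset.univ.sup' Finset.univ_nonempty
      (fun ℓ => (1 / C ℓ) * ∑ r ∈ Finset.univ.filter (fun r => ℓ ∈ route r), lam r * σ r))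
    (hρMpos : 0 < ρM)
    (xstar : R → ℝ) (hxstar : ∀ r, xstar r = (x r : ℝ) / (lam r * σ r))
    (xM : ℝ) (hxM : xM = Finset.univ.sup' Finset.univ_nonempty xstar)
    (D : ℝ)
    (hD : D = ∑ r, (lam r + ((x r : ℝ) / σ r) *
      (route r).inf' (hroute r)
        (fun ℓ => C ℓ / (∑ r' ∈ Finset.univ.filter (fun r' => ℓ ∈ route r'), (x r' : ℝ))))) :
    ∑ r, (γ r ^ (x r + 1) * (lam r / D) -
          γ r ^ (x r) * (((x r : ℝ) / σ r) *
            (route r).inf' (hroute r)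
              (fun ℓ => C ℓ /
                (∑ r' ∈ Finset.univ.filter (fun r' => ℓ ∈ route r'), (x r' : ℝ))) / D)) ≤
      ∑ r, (lam r / (ρM * D)) * γ r ^ (x r) * (ρM * γ r - xstar r / xM) := by
  have hμnn : ∀ r, 0 ≤ (route r).inf' (hroute r)
      (fun ℓ => C ℓ / (∑ r' ∈ Finset.univ.filter (fun r' => ℓ ∈ route r'), (x r' : ℝ))) := by
    intro r
    apply Finset.le_inf'
    intro ℓ _
    exact div_nonneg (hC ℓ).le (Finset.sum_nonneg fun _ _ => Nat.cast_nonneg _)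
  have hDpos : 0 < D := by
    rw [hD]
    apply Finset.sum_pos
    · intro r _
      have := hμnn r
      have h1 : 0 ≤ ((x r : ℝ) / σ r) := div_nonneg (Nat.cast_nonneg _) (hσ r).le
      nlinarith [hlam r]
    · exact Finset.univ_nonempty
  obtain ⟨r0, hr0⟩ := hx
  have hxMpos : 0 < xM := by
    have h1 : 0 < xstar r0 := by
      rw [hxstar]
      exact div_pos (by exact_mod_cast hr0) (mul_pos (hlam r0) (hσ r0))
    have h2 : xstar r0 ≤ xM := by
      rw [hxM]; exact Finset.le_sup' xstar (Finset.mem_univ r0)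
    linarith
  apply Finset.sum_le_sum
  intro r _
  set μ := (route r).inf' (hroute r)
      (fun ℓ => C ℓ / (∑ r' ∈ Finset.univ.filter (fun r' => ℓ ∈ route r'), (x r' : ℝ))) with hμ
  have key : lam r * (xstar r / xM) / ρM ≤ ((x r : ℝ) / σ r) * μ := by
    rcases Nat.eq_zero_or_pos (x r) with h0 | hpos
    · rw [hxstar, h0]
      simp
    · have hxr : (0 : ℝ) < (x r : ℝ) := by exact_mod_cast hpos
      have hinf : 1 / (ρM * xM) ≤ μ := by
        rw [hμ]
        apply Finset.le_inf'
        intro ℓ hℓ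
        set X := ∑ r' ∈ Finset.univ.filter (fun r' => ℓ ∈ route r'), (x r' : ℝ) with hX
        have hXpos : 0 < X := by
          rw [hX]
          apply Finset.sum_pos'
          · intro i _; exact Nat.cast_nonneg _
          · exact ⟨r, Finset.mem_filter.mpr ⟨Finset.mem_univ r, hℓ⟩, hxr⟩
        rw [div_le_div_iff₀ (mul_pos hρMpos hxMpos) hXpos]
        have hsum : ∑ r' ∈ Finset.univ.filter (fun r' => ℓ ∈ route r'), lam r' * σ r'
            ≤ ρM * C ℓ := by
          have := Finset.le_sup' (f := fun ℓ => (1 / C ℓ) *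
            ∑ r ∈ Finset.univ.filter (fun r => ℓ ∈ route r), lam r * σ r)
            (Finset.mem_univ ℓ)
          rw [← hρM] at this
          have hCℓ := hC ℓ
          rw [div_mul_eq_mul_div, one_mul, div_le_iff₀ hCℓ] at this
          linarith
        have hXle : X ≤ xM * ∑ r' ∈ Finset.univ.filter (fun r' => ℓ ∈ route r'), lam r' * σ r' := by
          rw [hX, Finset.mul_sum]
          apply Finset.sum_le_sum
          intro i _
          have h1 : xstar i ≤ xM := by
            rw [hxM]; exact Finset.le_sup' xstar (Finset.mem_univ i)
          have h2 : (x i : ℝ) = xstar i * (lam i * σ i) := by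
            rw [hxstar, div_mul_cancel₀]
            exact (mul_pos (hlam i) (hσ i)).ne'
          rw [h2]
          exact mul_le_mul_of_nonneg_right h1 (mul_pos (hlam i) (hσ i)).le
        nlinarith [mul_le_mul_of_nonneg_left hsum hxMpos.le]
      have heq : lam r * (xstar r / xM) / ρM = ((x r : ℝ) / σ r) * (1 / (ρM * xM)) := by
        rw [hxstar]
        field_simp [(hlam r).ne', (hσ r).ne', hxMpos.ne', hρMpos.ne']
      rw [heq]
      exact mul_le_mul_of_nonneg_left hinf (div_nonneg (Nat.cast_nonneg _) (hσ r).le)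
  have hγpos : (0:ℝ) < γ r ^ x r := pow_pos (by linarith [hγ r]) _
  have expand : (lam r / (ρM * D)) * γ r ^ (x r) * (ρM * γ r - xstar r / xM)
      = γ r ^ (x r + 1) * (lam r / D) - γ r ^ x r * (lam r * (xstar r / xM) / ρM / D) := by
    field_simp [hDpos.ne', hρMpos.ne']
    ring
  rw [expand]
  have h2 := mul_le_mul_of_nonneg_left key hγpos.le
  have h3 := (div_le_div_iff_of_pos_right hDpos).mpr h2
  rw [mul_div_assoc (γ r ^ x r), mul_div_assoc (γ r ^ x r)] at h3
  linarith
end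

section
/- Let x be a nonzero state of a best-effort network, let D > 0, γ > 1 and real numbers θ < α with 0 < θ and α < 1, 0 < ρ_M. Then Σ_1 := Σ_{r : x*_r > α x*_M} (λ_r/(ρ_M D)) γ^{x*_r} (θ − x*_r/x*_M) satisfies Σ_1 ≤ (γ^{x*_M}/(ρ_M D)) (θ − α) min_{r∈𝓡} λ_r < 0 (every term of the sum is negative, and the sum is nonempty since it contains any r₀ with x*_{r₀} = x*_M). -/
/-- Let `x` be a nonzero state of a best-effort network, let `D > 0`,
`γ > 1` and real numbers `θ < α` with `0 < θ`, `α < 1`, and `0 < ρ_M`. Then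
`Σ₁ = ∑_{r : x*_r > α x*_M} (λ_r/(ρ_M D)) γ^{x*_r} (θ − x*_r/x*_M)` satisfies
`Σ₁ ≤ (γ^{x*_M}/(ρ_M D)) (θ − α) min_r λ_r < 0`. -/
theorem statement_6 {L R : Type*} [Fintype L] [Fintype R] [Nonempty L] [Nonempty R]
    [DecidableEq L]
    (route : R → Finset L) (hroute : ∀ r, (route r).Nonempty)
    (C : L → ℝ) (hC : ∀ ℓ, 0 < C ℓ)
    (lam σ : R → ℝ) (hlam : ∀ r, 0 < lam r) (hσ : ∀ r, 0 < σ r)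
    (x : R → ℕ) (hx : ∃ r, 0 < x r)
    (D γ θ α : ℝ) (hD : 0 < D) (hγ : 1 < γ) (hθα : θ < α) (hθ : 0 < θ) (hα : α < 1)
    (ρM : ℝ)
    (hρM : ρM = Finset.univ.sup' Finset.univ_nonempty
      (fun ℓ => (1 / C ℓ) * ∑ r ∈ Finset.univ.filter (fun r => ℓ ∈ route r), lam r * σ r))
    (hρMpos : 0 < ρM)
    (xstar : R → ℝ) (hxstar : ∀ r, xstar r = (x r : ℝ) / (lam r * σ r))
    (xM : ℝ) (hxM : xM = Finset.univ.sup' Finset.univ_nonempty xstar) :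
    (∑ r ∈ Finset.univ.filter (fun r => α * xM < xstar r),
        (lam r / (ρM * D)) * γ ^ (xstar r) * (θ - xstar r / xM)) ≤
      (γ ^ xM / (ρM * D)) * (θ - α) * Finset.univ.inf' Finset.univ_nonempty lam ∧
    (γ ^ xM / (ρM * D)) * (θ - α) * Finset.univ.inf' Finset.univ_nonempty lam < 0 := by
  classical
  have hγ0 : (0:ℝ) < γ := lt_trans one_pos hγ
  have hρD : 0 < ρM * D := mul_pos hρMpos hD
  have hle : ∀ r, xstar r ≤ xM := by
    intro r; rw [hxM]; exact Finset.le_sup' _ (Finset.mem_univ r)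
  obtain ⟨rp, hrp⟩ := hx
  have hxMpos : 0 < xM := by
    refine lt_of_lt_of_le ?_ (hle rp)
    rw [hxstar]
    exact div_pos (by exact_mod_cast hrp) (mul_pos (hlam rp) (hσ rp))
  obtain ⟨r₀, -, hr₀⟩ := Finset.exists_mem_eq_sup' (Finset.univ_nonempty (α := R)) xstar
  rw [← hxM] at hr₀
  set m := Finset.univ.inf' Finset.univ_nonempty lam with hm
  have hmpos : 0 < m := by
    rw [hm, Finset.lt_inf'_iff]
    exact fun r _ => hlam r
  have hmle : m ≤ lam r₀ := Finset.inf'_le _ (Finset.mem_univ r₀)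
  have hg : 0 < γ ^ xM := Real.rpow_pos_of_pos hγ0 xM
  set s := Finset.univ.filter (fun r => α * xM < xstar r) with hs
  have hr₀s : r₀ ∈ s := by
    rw [hs, Finset.mem_filter]
    refine ⟨Finset.mem_univ _, ?_⟩
    rw [← hr₀]
    nlinarith
  set f : R → ℝ := fun r => (lam r / (ρM * D)) * γ ^ (xstar r) * (θ - xstar r / xM)
    with hf
  have hterm : ∀ r ∈ s, f r ≤ 0 := by
    intro r hr
    rw [hs, Finset.mem_filter] at hr
    have h1 : α < xstar r / xM := (lt_div_iff₀ hxMpos).mpr (by linarith [hr.2])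
    have h2 : θ - xstar r / xM ≤ 0 := by linarith
    have h3 : 0 ≤ (lam r / (ρM * D)) * γ ^ (xstar r) :=
      mul_nonneg (div_nonneg (hlam r).le hρD.le) (Real.rpow_nonneg hγ0.le _)
    exact mul_nonpos_of_nonneg_of_nonpos h3 h2
  have hsum : ∑ r ∈ s, f r ≤ f r₀ := by
    rw [← Finset.add_sum_erase s f hr₀s]
    have : ∑ r ∈ s.erase r₀, f r ≤ 0 :=
      Finset.sum_nonpos (fun r hr => hterm r (Finset.mem_of_mem_erase hr))
    linarith
  have hfr₀ : f r₀ ≤ (γ ^ xM / (ρM * D)) * (θ - α) * m := by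
    rw [hf]
    simp only [← hr₀, div_self (ne_of_gt hxMpos)]
    have key : lam r₀ * (θ - 1) ≤ (θ - α) * m := by nlinarith [hlam r₀]
    have hK : 0 < γ ^ xM / (ρM * D) := div_pos hg hρD
    have := mul_le_mul_of_nonneg_left key (le_of_lt hK)
    calc lam r₀ / (ρM * D) * γ ^ xM * (θ - 1)
        = γ ^ xM / (ρM * D) * (lam r₀ * (θ - 1)) := by ring
      _ ≤ γ ^ xM / (ρM * D) * ((θ - α) * m) := this
      _ = γ ^ xM / (ρM * D) * (θ - α) * m := by ring
  refine ⟨le_trans hsum hfr₀, ?_⟩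
  have hK : 0 < γ ^ xM / (ρM * D) := div_pos hg hρD
  have : γ ^ xM / (ρM * D) * (θ - α) < 0 := mul_neg_of_pos_of_neg hK (by linarith)
  exact mul_neg_of_neg_of_pos this hmpos
end

section
/- Let γ > 1, 0 < θ < α < 1, 0 < ρ_M, and let C > 0, ε > 0 satisfy (θ − α) min_{r} λ_r + γ^{(α−1)C} |𝓡| θ max_{r} λ_r ≤ −ε. Then for every nonzero state x with x*_M > C and every 0 < D ≤ D' := |𝓡|(max_r λ_r + max_r (1/σ_r) · max_ℓ C_ℓ), one has Σ_r (λ_r/(ρ_M D)) γ^{x*_r} (θ − x*_r/x*_M) ≤ −ε γ^{C}/(ρ_M D') < 0. -/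
set_option maxHeartbeats 1000000


/-- Let `γ > 1`, `0 < θ < α < 1`, `0 < ρ_M`, and let `C₀ > 0`,
`ε > 0` satisfy `(θ − α) min_r λ_r + γ^{(α−1)C₀} |𝓡| θ max_r λ_r ≤ −ε`. Then for
every nonzero state `x` with `x*_M > C₀` and every
`0 < D ≤ D' = |𝓡| (max_r λ_r + max_r (1/σ_r) · max_ℓ C_ℓ)`, one has
`∑_r (λ_r/(ρ_M D)) γ^{x*_r} (θ − x*_r/x*_M) ≤ −ε γ^{C₀}/(ρ_M D') < 0`. -/
theorem statement_8 {L R : Type*} [Fintype L] [Fintype R] [Nonempty L] [Nonempty R]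
    [DecidableEq L]
    (route : R → Finset L) (hroute : ∀ r, (route r).Nonempty)
    (C : L → ℝ) (hC : ∀ ℓ, 0 < C ℓ)
    (lam σ : R → ℝ) (hlam : ∀ r, 0 < lam r) (hσ : ∀ r, 0 < σ r)
    (γ θ α : ℝ) (hγ : 1 < γ) (hθ : 0 < θ) (hθα : θ < α) (hα1 : α < 1)
    (ρM : ℝ)
    (hρM : ρM = Finset.univ.sup' Finset.univ_nonempty
      (fun ℓ => (1 / C ℓ) * ∑ r ∈ Finset.univ.filter (fun r => ℓ ∈ route r), lam r * σ r))
    (hρMpos : 0 < ρM)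
    (C₀ ε : ℝ) (hC₀ : 0 < C₀) (hε : 0 < ε)
    (hcond : (θ - α) * Finset.univ.inf' Finset.univ_nonempty lam +
        γ ^ ((α - 1) * C₀) * (Fintype.card R : ℝ) * θ *
          Finset.univ.sup' Finset.univ_nonempty lam ≤ -ε)
    (x : R → ℕ) (hx : ∃ r, 0 < x r)
    (xstar : R → ℝ) (hxstar : ∀ r, xstar r = (x r : ℝ) / (lam r * σ r))
    (xM : ℝ) (hxM : xM = Finset.univ.sup' Finset.univ_nonempty xstar)
    (hxMC : C₀ < xM)
    (D D' : ℝ)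
    (hD' : D' = (Fintype.card R : ℝ) *
      (Finset.univ.sup' Finset.univ_nonempty lam +
       Finset.univ.sup' Finset.univ_nonempty (fun r => 1 / σ r) *
       Finset.univ.sup' Finset.univ_nonempty C))
    (hDpos : 0 < D) (hDD' : D ≤ D') :
    (∑ r, (lam r / (ρM * D)) * γ ^ (xstar r) * (θ - xstar r / xM)) ≤
        -ε * γ ^ C₀ / (ρM * D') ∧
      -ε * γ ^ C₀ / (ρM * D') < 0 := by
  classical
  have hγ0 : (0:ℝ) < γ := lt_trans one_pos hγ
  have hxMpos : 0 < xM := lt_trans hC₀ hxMC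
  obtain ⟨r1⟩ := (inferInstance : Nonempty R)
  set lmin := Finset.univ.inf' Finset.univ_nonempty lam with hlmin
  set lmax := Finset.univ.sup' Finset.univ_nonempty lam with hlmax
  have hlminpos : 0 < lmin := by
    rw [hlmin, Finset.lt_inf'_iff]
    exact fun r _ => hlam r
  have hlmaxpos : 0 < lmax :=
    lt_of_lt_of_le (hlam r1) (Finset.le_sup' lam (Finset.mem_univ r1))
  have hlminle : ∀ r, lmin ≤ lam r := fun r =>
    Finset.inf'_le lam (Finset.mem_univ r)
  have hlmaxle : ∀ r, lam r ≤ lmax := fun r =>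
    Finset.le_sup' lam (Finset.mem_univ r)
  have hxle : ∀ r, xstar r ≤ xM := fun r => by
    rw [hxM]; exact Finset.le_sup' xstar (Finset.mem_univ r)
  have hx0 : ∀ r, 0 ≤ xstar r := fun r => by
    rw [hxstar r]
    have := hlam r; have := hσ r
    positivity
  obtain ⟨r₀, -, hr₀⟩ := Finset.exists_mem_eq_sup' (Finset.univ_nonempty (α := R)) xstar
  have hr₀x : xstar r₀ = xM := by rw [hxM, hr₀]
  set f : R → ℝ := fun r => lam r * γ ^ (xstar r) * (θ - xstar r / xM) with hf
  set bnd : ℝ := lmax * θ * γ ^ (α * xM) with hbnd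
  have hbnd0 : 0 ≤ bnd := by
    have : (0:ℝ) < γ ^ (α * xM) := Real.rpow_pos_of_pos hγ0 _
    positivity
  have hterm : ∀ r, f r ≤ bnd := by
    intro r
    by_cases h2 : θ - xstar r / xM ≤ 0
    · have : f r ≤ 0 := by
        have h3 : 0 ≤ lam r * γ ^ (xstar r) := by
          have := hlam r; have : (0:ℝ) < γ ^ (xstar r) := Real.rpow_pos_of_pos hγ0 _
          positivity
        exact mul_nonpos_of_nonneg_of_nonpos h3 h2
      linarith
    · push_neg at h2
      have hq : xstar r / xM < θ := by linarith
      have hle : xstar r ≤ α * xM := by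
        have := (div_lt_iff₀ hxMpos).1 (lt_trans hq hθα)
        linarith
      have hrpow : γ ^ (xstar r) ≤ γ ^ (α * xM) :=
        (Real.rpow_le_rpow_left_iff hγ).2 hle
      have hq0 : 0 ≤ xstar r / xM := div_nonneg (hx0 r) hxMpos.le
      have hgp : (0:ℝ) < γ ^ (xstar r) := Real.rpow_pos_of_pos hγ0 _
      calc lam r * γ ^ (xstar r) * (θ - xstar r / xM)
          ≤ lam r * γ ^ (xstar r) * θ := by
            apply mul_le_mul_of_nonneg_left (by linarith)
            have := hlam r; positivity
        _ ≤ lmax * γ ^ (α * xM) * θ := by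
            apply mul_le_mul_of_nonneg_right _ hθ.le
            exact mul_le_mul (hlmaxle r) hrpow hgp.le hlmaxpos.le
        _ = bnd := by rw [hbnd]; ring
  have hgxM : (0:ℝ) < γ ^ xM := Real.rpow_pos_of_pos hγ0 _
  have hfr₀ : f r₀ ≤ lmin * (θ - α) * γ ^ xM := by
    rw [hf]
    simp only [hr₀x, div_self hxMpos.ne']
    have h1 : lam r₀ * (θ - 1) ≤ lmin * (θ - α) := by
      nlinarith [hlminle r₀, hlminpos]
    nlinarith [hgxM]
  have hsumT : ∑ r, f r ≤ lmin * (θ - α) * γ ^ xM + (Fintype.card R : ℝ) * bnd := by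
    have hsplit : ∑ r, f r = ∑ r ∈ Finset.univ.erase r₀, f r + f r₀ :=
      (Finset.sum_erase_add _ _ (Finset.mem_univ r₀)).symm
    have hrest : ∑ r ∈ Finset.univ.erase r₀, f r ≤ (Fintype.card R : ℝ) * bnd := by
      calc ∑ r ∈ Finset.univ.erase r₀, f r
          ≤ ∑ _r ∈ Finset.univ.erase r₀, bnd :=
            Finset.sum_le_sum (fun r _ => hterm r)
        _ = ((Finset.univ.erase r₀).card : ℝ) * bnd := by
            rw [Finset.sum_const, nsmul_eq_mul]
        _ ≤ (Fintype.card R : ℝ) * bnd := by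
            apply mul_le_mul_of_nonneg_right _ hbnd0
            exact_mod_cast Finset.card_le_card (Finset.erase_subset _ _)
    rw [hsplit]; linarith
  have hmono : γ ^ ((α - 1) * xM) ≤ γ ^ ((α - 1) * C₀) := by
    apply (Real.rpow_le_rpow_left_iff hγ).2
    nlinarith
  have hbr : lmin * (θ - α) + (Fintype.card R : ℝ) * lmax * θ * γ ^ ((α - 1) * xM)
      ≤ -ε := by
    have hcR : (0:ℝ) ≤ (Fintype.card R : ℝ) := Nat.cast_nonneg _
    have h4 : (Fintype.card R : ℝ) * lmax * θ * γ ^ ((α - 1) * xM)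
        ≤ (Fintype.card R : ℝ) * lmax * θ * γ ^ ((α - 1) * C₀) := by
      apply mul_le_mul_of_nonneg_left hmono
      positivity
    nlinarith [hcond]
  have hTC : ∑ r, f r ≤ -ε * γ ^ C₀ := by
    have hsplit2 : γ ^ (α * xM) = γ ^ ((α - 1) * xM) * γ ^ xM := by
      rw [← Real.rpow_add hγ0]; ring_nf
    have hT1 : ∑ r, f r ≤ -ε * γ ^ xM := by
      have := mul_le_mul_of_nonneg_right hbr hgxM.le
      calc ∑ r, f r ≤ lmin * (θ - α) * γ ^ xM + (Fintype.card R : ℝ) * bnd := hsumT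
        _ = (lmin * (θ - α) + (Fintype.card R : ℝ) * lmax * θ * γ ^ ((α - 1) * xM))
              * γ ^ xM := by rw [hbnd, hsplit2]; ring
        _ ≤ -ε * γ ^ xM := mul_le_mul_of_nonneg_right hbr hgxM.le
    have hgle : γ ^ C₀ ≤ γ ^ xM := (Real.rpow_le_rpow_left_iff hγ).2 hxMC.le
    have hmul : -ε * γ ^ xM ≤ -ε * γ ^ C₀ :=
      mul_le_mul_of_nonpos_left hgle (by linarith : -ε ≤ 0)
    linarith
  -- positivity of D'
  have hσmax : 0 < Finset.univ.sup' Finset.univ_nonempty (fun r => 1 / σ r) :=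
    lt_of_lt_of_le (by have := hσ r1; positivity : (0:ℝ) < 1 / σ r1)
      (Finset.le_sup' (fun r => 1 / σ r) (Finset.mem_univ r1))
  have hCmax : 0 < Finset.univ.sup' Finset.univ_nonempty C :=
    lt_of_lt_of_le (hC (Classical.arbitrary L))
      (Finset.le_sup' C (Finset.mem_univ _))
  have hcardpos : (0:ℝ) < (Fintype.card R : ℝ) := by
    exact_mod_cast Fintype.card_pos
  have hD'pos : 0 < D' := by
    rw [hD']
    exact mul_pos hcardpos (add_pos hlmaxpos (mul_pos hσmax hCmax))
  have hρD : 0 < ρM * D := mul_pos hρMpos hDpos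
  have hρD' : 0 < ρM * D' := mul_pos hρMpos hD'pos
  have hgC₀ : (0:ℝ) < γ ^ C₀ := Real.rpow_pos_of_pos hγ0 _
  have hsecond : -ε * γ ^ C₀ / (ρM * D') < 0 := by
    apply div_neg_of_neg_of_pos _ hρD'
    nlinarith
  refine ⟨?_, hsecond⟩
  have hrw : (∑ r, (lam r / (ρM * D)) * γ ^ (xstar r) * (θ - xstar r / xM))
      = (∑ r, f r) / (ρM * D) := by
    rw [Finset.sum_div]
    exact Finset.sum_congr rfl (fun r _ => by rw [hf]; ring)
  rw [hrw]
  calc (∑ r, f r) / (ρM * D) ≤ (-ε * γ ^ C₀) / (ρM * D) :=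
        div_le_div_of_nonneg_right hTC hρD.le
    _ ≤ -ε * γ ^ C₀ / (ρM * D') := by
        rw [div_le_div_iff₀ hρD hρD']
        have hnum : -ε * γ ^ C₀ ≤ 0 := by nlinarith
        have hden : ρM * D ≤ ρM * D' :=
          mul_le_mul_of_nonneg_left hDD' hρMpos.le
        exact mul_le_mul_of_nonpos_left hden hnum
end

section
/- Suppose some link ℓ₀ has load ρ_{ℓ₀} > 1. Let x be any state and (ζ_r) any nonnegative bandwidth allocation satisfying the capacity constraints Σ_{r∋ℓ} x_r ζ_r ≤ C_ℓ for all links ℓ, and let D := Σ_r (λ_r + (x_r/σ_r) ζ_r) > 0. Then the expected one-step change of g(x) := Σ_{r∋ℓ₀} σ_r x_r under the jump chain with transition probabilities λ_r/D (for x_r → x_r+1) and (x_r/σ_r)ζ_r/D (for x_r → x_r−1) satisfies Σ_{r∋ℓ₀} σ_r ( λ_r/D − (x_r/σ_r) ζ_r / D ) ≥ (C_{ℓ₀} ρ_{ℓ₀} − C_{ℓ₀})/D > 0. -/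
/-- Suppose some link `ℓ₀` has load `ρ_{ℓ₀} > 1`. Let `x` be any
state and `ζ` any nonnegative bandwidth allocation satisfying the capacity
constraints `∑_{r ∋ ℓ} x_r ζ_r ≤ C_ℓ` for all links `ℓ`, and let
`D = ∑_r (λ_r + (x_r/σ_r) ζ_r) > 0`. Then the expected one-step change of
`g(x) = ∑_{r ∋ ℓ₀} σ_r x_r` under the embedded jump chain satisfies
`∑_{r ∋ ℓ₀} σ_r (λ_r/D − (x_r/σ_r) ζ_r / D) ≥ (C_{ℓ₀} ρ_{ℓ₀} − C_{ℓ₀})/D > 0`. -/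
theorem statement_9 {L R : Type*} [Fintype L] [Fintype R] [DecidableEq L]
    (route : R → Finset L) (hroute : ∀ r, (route r).Nonempty)
    (C : L → ℝ) (hC : ∀ ℓ, 0 < C ℓ)
    (lam σ : R → ℝ) (hlam : ∀ r, 0 < lam r) (hσ : ∀ r, 0 < σ r)
    (ℓ₀ : L) (ρ₀ : ℝ)
    (hρ₀ : ρ₀ = (1 / C ℓ₀) *
      ∑ r ∈ Finset.univ.filter (fun r => ℓ₀ ∈ route r), lam r * σ r)
    (hρ₀gt : 1 < ρ₀)
    (x : R → ℕ) (ζ : R → ℝ) (hζnonneg : ∀ r, 0 ≤ ζ r)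
    (hcap : ∀ ℓ, ∑ r ∈ Finset.univ.filter (fun r => ℓ ∈ route r), (x r : ℝ) * ζ r ≤ C ℓ)
    (D : ℝ) (hD : D = ∑ r, (lam r + ((x r : ℝ) / σ r) * ζ r)) (hDpos : 0 < D) :
    (C ℓ₀ * ρ₀ - C ℓ₀) / D ≤
        ∑ r ∈ Finset.univ.filter (fun r => ℓ₀ ∈ route r),
          σ r * (lam r / D - ((x r : ℝ) / σ r) * ζ r / D) ∧
      0 < (C ℓ₀ * ρ₀ - C ℓ₀) / D := by
  have hCρ : C ℓ₀ * ρ₀ = ∑ r ∈ Finset.univ.filter (fun r => ℓ₀ ∈ route r), lam r * σ r := by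
    rw [hρ₀, one_div, mul_inv_cancel_left₀ (hC ℓ₀).ne']
  have hsum : ∑ r ∈ Finset.univ.filter (fun r => ℓ₀ ∈ route r),
      σ r * (lam r / D - ((x r : ℝ) / σ r) * ζ r / D)
      = (∑ r ∈ Finset.univ.filter (fun r => ℓ₀ ∈ route r),
          (lam r * σ r - (x r : ℝ) * ζ r)) / D := by
    rw [Finset.sum_div]
    refine Finset.sum_congr rfl (fun r _ => ?_)
    have := (hσ r).ne'
    field_simp
  constructor
  · rw [hsum]
    gcongr
    rw [Finset.sum_sub_distrib, hCρ]
    have := hcap ℓ₀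
    linarith
  · apply div_pos _ hDpos
    nlinarith [hC ℓ₀]
end

section
/- Let L ≥ 2 be an integer and (α_m)_{m≥0} nonnegative reals with Σ_m α_m = 1 and 0 < ᾱ := Σ_{m≥1} m α_m < ∞. Define u_k := k Σ_{k_2,…,k_L ≥ 1} min(1/k, 1/k_2, …, 1/k_L) Π_{i=2}^L k_i α_{k_i} for k ≥ 1. Then u_k admits the simplified form u_k = k Σ_{y=k}^∞ (1/(y(y+1))) ( Σ_{m=1}^{y} m α_m )^{L−1}. -/
open Filter Topology

lemma tele (M : ℕ) (hM : 1 ≤ M) :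
    HasSum (fun y : ℕ => if M ≤ y then 1/((y:ℝ)*((y:ℝ)+1)) else 0) (1/(M:ℝ)) := by
  have hnn : ∀ y : ℕ, 0 ≤ (if M ≤ y then 1/((y:ℝ)*((y:ℝ)+1)) else 0) := by
    intro y; split
    · positivity
    · exact le_rfl
  rw [hasSum_iff_tendsto_nat_of_nonneg hnn]
  have hpart : ∀ N : ℕ, ∑ y ∈ Finset.range N, (if M ≤ y then 1/((y:ℝ)*((y:ℝ)+1)) else 0)
      = 1/(M:ℝ) - 1/((max M N : ℕ) : ℝ) := by
    intro N
    induction N with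
    | zero => simp
    | succ N ih =>
      rw [Finset.sum_range_succ, ih]
      by_cases h : M ≤ N
      · rw [if_pos h, Nat.max_eq_right h, Nat.max_eq_right (h.trans (Nat.le_succ N))]
        have hN0 : (N:ℝ) ≠ 0 := by
          have : 1 ≤ N := hM.trans h
          positivity
        have hN1 : (N:ℝ) + 1 ≠ 0 := by positivity
        push_cast
        field_simp
        ring
      · rw [if_neg h, Nat.max_eq_left (le_of_not_ge h), Nat.max_eq_left (by omega)]
        ring
  simp only [hpart]
  have h2 : Tendsto (fun N : ℕ => 1/(((max M N : ℕ)) : ℝ)) atTop (𝓝 0) := by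
    apply Tendsto.congr' _ tendsto_one_div_atTop_nhds_zero_nat
    filter_upwards [eventually_ge_atTop M] with N hN
    rw [Nat.max_eq_right hN]
  have h3 : Tendsto (fun _ : ℕ => 1/(M:ℝ)) atTop (𝓝 (1/(M:ℝ))) := tendsto_const_nhds
  simpa using h3.sub h2

lemma inf_inv {n : ℕ} (Hne : (Finset.univ : Finset (Fin n)).Nonempty) (κ : Fin n → ℕ+) :
    Finset.univ.inf' Hne (fun i => 1/((κ i : ℕ):ℝ))
      = 1/(((Finset.univ.sup' Hne fun i => (κ i : ℕ)) : ℕ) : ℝ) := by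
  apply le_antisymm
  · obtain ⟨i0, -, hi0⟩ := Finset.exists_mem_eq_sup' Hne (fun i => (κ i : ℕ))
    rw [hi0]
    exact Finset.inf'_le _ (Finset.mem_univ i0)
  · apply Finset.le_inf'
    intro i _
    apply one_div_le_one_div_of_le
    · exact_mod_cast (κ i).pos
    · exact_mod_cast Finset.le_sup' (fun i => ((κ i : ℕ) : ℕ)) (Finset.mem_univ i)

lemma icc_pnat_sum (α : ℕ → ℝ) (y : ℕ) (hy : 0 < y) :
    ∑ m ∈ Finset.Icc (1:ℕ+) ⟨y, hy⟩, ((m:ℕ):ℝ) * α (m:ℕ)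
      = ∑ m ∈ Finset.Icc 1 y, (m:ℝ) * α m := by
  refine Finset.sum_nbij' (i := fun m : ℕ+ => (m:ℕ)) (j := fun m : ℕ => ⟨max m 1, by omega⟩)
    ?_ ?_ ?_ ?_ ?_
  · intro a ha
    replace ha := Finset.mem_Icc.mp ha; rw [Finset.mem_Icc]
    exact ⟨a.pos, by exact_mod_cast ha.2⟩
  · intro a ha
    rw [Finset.mem_Icc] at ha; refine Finset.mem_Icc.mpr ?_
    constructor
    · exact PNat.one_le _
    · refine (PNat.coe_le_coe _ _).mp ?_
      simpa using by omega
  · intro a ha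
    replace ha := Finset.mem_Icc.mp ha
    exact PNat.coe_injective (by simp [Nat.max_eq_left a.pos])
  · intro a ha
    rw [Finset.mem_Icc] at ha
    simp [Nat.max_eq_left ha.1]
  · intro a ha; rfl

lemma stmt12_inner_sum (n : ℕ) (α : ℕ → ℝ) (hα : ∀ m, 0 ≤ α m) (y : ℕ) (hy : 0 < y) :
    (∑' κ : Fin n → ℕ+, if (∀ i, (κ i : ℕ) ≤ y) then
        ENNReal.ofReal (∏ i, ((κ i:ℕ):ℝ) * α (κ i:ℕ)) else 0)
      = ENNReal.ofReal ((∑ m ∈ Finset.Icc 1 y, (m:ℝ) * α m) ^ n) := by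
  have hvanish : ∀ κ : Fin n → ℕ+,
      κ ∉ Fintype.piFinset (fun _ : Fin n => Finset.Icc (1:ℕ+) ⟨y, hy⟩) →
      (if (∀ i, (κ i : ℕ) ≤ y) then
        ENNReal.ofReal (∏ i, ((κ i:ℕ):ℝ) * α (κ i:ℕ)) else 0) = 0 := by
    intro κ hκ
    rw [Fintype.mem_piFinset] at hκ
    push_neg at hκ
    obtain ⟨i, hi⟩ := hκ
    replace hi : ¬(1 ≤ κ i ∧ κ i ≤ ⟨y, hy⟩) := fun h => hi (Finset.mem_Icc.mpr h)
    push_neg at hi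
    have h2 := hi (PNat.one_le _)
    rw [if_neg]
    intro hall
    exact h2 ((PNat.coe_le_coe _ _).mp (hall i))
  rw [tsum_eq_sum hvanish]
  have hmem : ∀ κ ∈ Fintype.piFinset (fun _ : Fin n => Finset.Icc (1:ℕ+) ⟨y, hy⟩),
      (if (∀ i, (κ i : ℕ) ≤ y) then
        ENNReal.ofReal (∏ i, ((κ i:ℕ):ℝ) * α (κ i:ℕ)) else 0)
        = ENNReal.ofReal (∏ i, ((κ i:ℕ):ℝ) * α (κ i:ℕ)) := by
    intro κ hκ
    rw [Fintype.mem_piFinset] at hκ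
    rw [if_pos]
    intro i
    have := (Finset.mem_Icc.mp (hκ i)).2
    exact_mod_cast this
  rw [Finset.sum_congr rfl hmem,
    ← ENNReal.ofReal_sum_of_nonneg (fun κ _ => Finset.prod_nonneg
      (fun i _ => mul_nonneg (Nat.cast_nonneg _) (hα _)))]
  congr 1
  rw [← Finset.prod_univ_sum (fun _ : Fin n => Finset.Icc (1:ℕ+) ⟨y, hy⟩)
      (fun _ (m : ℕ+) => ((m:ℕ):ℝ) * α (m:ℕ)),
    icc_pnat_sum α y hy, Finset.prod_const, Finset.card_univ, Fintype.card_fin]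

/-- Let `L ≥ 2` and `(α_m)_{m≥0}` be nonnegative reals with
`∑_m α_m = 1` and `0 < ᾱ = ∑_{m≥1} m α_m < ∞`. Define, for `k ≥ 1`,
`u_k = k ∑_{k_2,…,k_L ≥ 1} min(1/k, 1/k_2, …, 1/k_L) ∏_{i=2}^L k_i α_{k_i}`.
Then `u_k` admits the simplified form
`u_k = k ∑_{y=k}^∞ (1/(y(y+1))) (∑_{m=1}^{y} m α_m)^{L−1}`. -/
theorem statement_12 (L : ℕ) (hL : 2 ≤ L) (α : ℕ → ℝ) (hα : ∀ m, 0 ≤ α m)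
    (hsum : Summable α) (hsum1 : ∑' m, α m = 1)
    (hms : Summable (fun m : ℕ => (m : ℝ) * α m)) (habar : 0 < ∑' m : ℕ, (m : ℝ) * α m)
    (k : ℕ) (hk : 1 ≤ k) :
    (k : ℝ) * ∑' κ : Fin (L - 1) → ℕ+,
        (min (1 / (k : ℝ))
            (Finset.univ.inf' ⟨(⟨0, by omega⟩ : Fin (L - 1)), Finset.mem_univ _⟩
              (fun i => 1 / ((κ i : ℕ) : ℝ)))) *
          ∏ i, ((κ i : ℕ) : ℝ) * α (κ i : ℕ) =
      (k : ℝ) * ∑' y : ℕ, if k ≤ y then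
        (1 / ((y : ℝ) * ((y : ℝ) + 1))) *
          (∑ m ∈ Finset.Icc 1 y, (m : ℝ) * α m) ^ (L - 1) else 0 := by
  have Hne : (Finset.univ : Finset (Fin (L - 1))).Nonempty :=
    ⟨⟨0, by omega⟩, Finset.mem_univ _⟩
  -- nonnegativity of both summand families
  have hf0 : ∀ κ : Fin (L-1) → ℕ+,
      0 ≤ (min (1 / (k : ℝ)) (Finset.univ.inf' Hne (fun i => 1 / ((κ i : ℕ) : ℝ)))) *
          ∏ i, ((κ i : ℕ) : ℝ) * α (κ i : ℕ) := by
    intro κ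
    refine mul_nonneg (le_min (by positivity) (Finset.le_inf' _ _ fun i _ => by positivity))
      (Finset.prod_nonneg fun i _ => mul_nonneg (Nat.cast_nonneg _) (hα _))
  have hg0 : ∀ y : ℕ, 0 ≤ (if k ≤ y then
      (1 / ((y : ℝ) * ((y : ℝ) + 1))) *
        (∑ m ∈ Finset.Icc 1 y, (m : ℝ) * α m) ^ (L - 1) else 0) := by
    intro y
    split
    · refine mul_nonneg (by positivity) (pow_nonneg ?_ _)
      exact Finset.sum_nonneg fun m _ => mul_nonneg (Nat.cast_nonneg _) (hα _)
    · exact le_rfl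
  -- key ENNReal identity
  have key : (∑' κ : Fin (L-1) → ℕ+, ENNReal.ofReal
        ((min (1 / (k : ℝ)) (Finset.univ.inf' Hne (fun i => 1 / ((κ i : ℕ) : ℝ)))) *
          ∏ i, ((κ i : ℕ) : ℝ) * α (κ i : ℕ)))
      = ∑' y : ℕ, ENNReal.ofReal (if k ≤ y then
          (1 / ((y : ℝ) * ((y : ℝ) + 1))) *
            (∑ m ∈ Finset.Icc 1 y, (m : ℝ) * α m) ^ (L - 1) else 0) := by
    have step1 : ∀ κ : Fin (L-1) → ℕ+,
        ENNReal.ofReal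
          ((min (1 / (k : ℝ)) (Finset.univ.inf' Hne (fun i => 1 / ((κ i : ℕ) : ℝ)))) *
            ∏ i, ((κ i : ℕ) : ℝ) * α (κ i : ℕ))
        = ∑' y : ℕ, (if max k (Finset.univ.sup' Hne fun i => ((κ i : ℕ))) ≤ y then
            ENNReal.ofReal (1/((y:ℝ)*((y:ℝ)+1)))
              * ENNReal.ofReal (∏ i, ((κ i : ℕ) : ℝ) * α (κ i : ℕ)) else 0) := by
      intro κ
      have hM1 : 1 ≤ max k (Finset.univ.sup' Hne fun i => ((κ i : ℕ))) :=
        le_max_of_le_left hk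
      have hmin : min (1 / (k : ℝ)) (Finset.univ.inf' Hne (fun i => 1 / ((κ i : ℕ) : ℝ)))
          = 1/(((max k (Finset.univ.sup' Hne fun i => ((κ i : ℕ)))) : ℕ) : ℝ) := by
        rw [inf_inv]
        rcases le_total k (Finset.univ.sup' Hne fun i => ((κ i : ℕ))) with h | h
        · rw [Nat.max_eq_right h, min_eq_right]
          apply one_div_le_one_div_of_le
          · exact_mod_cast hk
          · exact_mod_cast h
        · rw [Nat.max_eq_left h, min_eq_left]
          apply one_div_le_one_div_of_le
          · obtain ⟨i0, -, hi0⟩ := Finset.exists_mem_eq_sup' Hne (fun i => ((κ i : ℕ)))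
            rw [hi0]; exact_mod_cast (κ i0).pos
          · exact_mod_cast h
      have hnn : ∀ y : ℕ, 0 ≤ (if (max k (Finset.univ.sup' Hne fun i => ((κ i : ℕ)))) ≤ y
          then 1/((y:ℝ)*((y:ℝ)+1)) else 0) := by
        intro y; split
        · positivity
        · exact le_rfl
      have h1 : ENNReal.ofReal
            (1/(((max k (Finset.univ.sup' Hne fun i => ((κ i : ℕ)))) : ℕ) : ℝ))
          = ∑' y : ℕ, if (max k (Finset.univ.sup' Hne fun i => ((κ i : ℕ)))) ≤ y then
              ENNReal.ofReal (1/((y:ℝ)*((y:ℝ)+1))) else 0 := by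
        rw [← (tele _ hM1).tsum_eq, ENNReal.ofReal_tsum_of_nonneg hnn (tele _ hM1).summable]
        refine tsum_congr fun y => ?_
        split <;> simp
      rw [hmin, ENNReal.ofReal_mul (by positivity), h1, ← ENNReal.tsum_mul_right]
      exact tsum_congr fun y => by rw [ite_mul, zero_mul]
    rw [tsum_congr step1, ENNReal.tsum_comm]
    refine tsum_congr fun y => ?_
    by_cases hky : k ≤ y
    · have hy1 : 0 < y := hk.trans hky
      have hcond : ∀ κ : Fin (L-1) → ℕ+,
          ((max k (Finset.univ.sup' Hne fun i => ((κ i : ℕ)))) ≤ y) ↔ (∀ i, (κ i : ℕ) ≤ y) := by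
        intro κ
        rw [max_le_iff, Finset.sup'_le_iff]
        exact ⟨fun h i => h.2 i (Finset.mem_univ i), fun h => ⟨hky, fun i _ => h i⟩⟩
      have hre : ∀ κ : Fin (L-1) → ℕ+,
          (if max k (Finset.univ.sup' Hne fun i => ((κ i : ℕ))) ≤ y then
            ENNReal.ofReal (1/((y:ℝ)*((y:ℝ)+1)))
              * ENNReal.ofReal (∏ i, ((κ i : ℕ) : ℝ) * α (κ i : ℕ)) else 0)
          = ENNReal.ofReal (1/((y:ℝ)*((y:ℝ)+1))) *
            (if (∀ i, (κ i : ℕ) ≤ y) then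
              ENNReal.ofReal (∏ i, ((κ i : ℕ) : ℝ) * α (κ i : ℕ)) else 0) := by
        intro κ
        rw [if_congr (hcond κ) rfl rfl, mul_ite, mul_zero]
      rw [tsum_congr hre, ENNReal.tsum_mul_left, stmt12_inner_sum (L-1) α hα y hy1,
        if_pos hky, ENNReal.ofReal_mul (by positivity)]
    · have hz : ∀ κ : Fin (L-1) → ℕ+,
          (if max k (Finset.univ.sup' Hne fun i => ((κ i : ℕ))) ≤ y then
            ENNReal.ofReal (1/((y:ℝ)*((y:ℝ)+1)))
              * ENNReal.ofReal (∏ i, ((κ i : ℕ) : ℝ) * α (κ i : ℕ)) else 0) = 0 := by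
        intro κ
        exact if_neg fun h => hky (le_trans (le_max_left _ _) h)
      rw [tsum_congr hz, tsum_zero, if_neg hky, ENNReal.ofReal_zero]
  -- pass back to real tsums
  have main : (∑' κ : Fin (L-1) → ℕ+,
      (min (1 / (k : ℝ)) (Finset.univ.inf' Hne (fun i => 1 / ((κ i : ℕ) : ℝ)))) *
        ∏ i, ((κ i : ℕ) : ℝ) * α (κ i : ℕ))
      = ∑' y : ℕ, (if k ≤ y then
          (1 / ((y : ℝ) * ((y : ℝ) + 1))) *
            (∑ m ∈ Finset.Icc 1 y, (m : ℝ) * α m) ^ (L - 1) else 0) := by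
    calc _ = ∑' κ : Fin (L-1) → ℕ+, (ENNReal.ofReal
            ((min (1 / (k : ℝ)) (Finset.univ.inf' Hne (fun i => 1 / ((κ i : ℕ) : ℝ)))) *
              ∏ i, ((κ i : ℕ) : ℝ) * α (κ i : ℕ))).toReal := by
          exact tsum_congr fun κ => (ENNReal.toReal_ofReal (hf0 κ)).symm
      _ = (∑' κ : Fin (L-1) → ℕ+, ENNReal.ofReal
            ((min (1 / (k : ℝ)) (Finset.univ.inf' Hne (fun i => 1 / ((κ i : ℕ) : ℝ)))) *
              ∏ i, ((κ i : ℕ) : ℝ) * α (κ i : ℕ))).toReal :=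
          (ENNReal.tsum_toReal_eq fun _ => ENNReal.ofReal_ne_top).symm
      _ = (∑' y : ℕ, ENNReal.ofReal (if k ≤ y then
            (1 / ((y : ℝ) * ((y : ℝ) + 1))) *
              (∑ m ∈ Finset.Icc 1 y, (m : ℝ) * α m) ^ (L - 1) else 0)).toReal := by
          rw [key]
      _ = ∑' y : ℕ, (if k ≤ y then
            (1 / ((y : ℝ) * ((y : ℝ) + 1))) *
              (∑ m ∈ Finset.Icc 1 y, (m : ℝ) * α m) ^ (L - 1) else 0) := by
          rw [ENNReal.tsum_toReal_eq fun _ => ENNReal.ofReal_ne_top]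
          exact tsum_congr fun y => ENNReal.toReal_ofReal (hg0 y)
  exact congrArg (fun t => (k : ℝ) * t) main
end

section
/- Let L ≥ 2 be an integer and (α_m)_{m≥0} nonnegative reals with Σ_m α_m = 1 and 0 < ᾱ := Σ_{m≥1} m α_m < ∞, and define u_k := k Σ_{k_2,…,k_L ≥ 1} min(1/k, 1/k_2, …, 1/k_L) Π_{i=2}^L k_i α_{k_i} for k ≥ 1. Then the sequence (u_k)_{k≥1} is nondecreasing in k, u_k ≤ ᾱ^{L−1} for all k, and lim_{k→∞} u_k = ᾱ^{L−1}. -/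
open Filter Topology

lemma aux_prod_tsum {f : ℕ+ → ℝ} (hf0 : ∀ m, 0 ≤ f m) (hf : Summable f) :
    ∀ n : ℕ, Summable (fun κ : Fin n → ℕ+ => ∏ i, f (κ i)) ∧
      ∑' κ : Fin n → ℕ+, ∏ i, f (κ i) = (∑' m, f m) ^ n := by
  intro n
  induction n with
  | zero =>
    constructor
    · exact Summable.of_finite
    · simp
  | succ n ih =>
    obtain ⟨ihs, iht⟩ := ih
    set e := Fin.consEquiv (fun _ : Fin (n + 1) => ℕ+)
    have hcomp : ∀ p : ℕ+ × (Fin n → ℕ+),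
        (∏ i, f (e p i)) = f p.1 * ∏ i, f (p.2 i) := by
      intro p
      rw [Fin.prod_univ_succ]
      simp [e, Fin.consEquiv]
    have hsum2 : Summable (fun p : ℕ+ × (Fin n → ℕ+) => f p.1 * ∏ i, f (p.2 i)) := by
      apply Summable.mul_of_nonneg hf ihs hf0
      exact fun κ => Finset.prod_nonneg fun i _ => hf0 _
    have hse : Summable (fun p : ℕ+ × (Fin n → ℕ+) => ∏ i, f (e p i)) := by
      exact hsum2.congr fun p => (hcomp p).symm
    constructor
    · exact (e.summable_iff (f := fun κ : Fin (n+1) → ℕ+ => ∏ i, f (κ i))).mp hse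
    · have h1 : ∑' κ : Fin (n+1) → ℕ+, ∏ i, f (κ i)
          = ∑' p : ℕ+ × (Fin n → ℕ+), f p.1 * ∏ i, f (p.2 i) := by
        rw [← e.tsum_eq (fun κ : Fin (n+1) → ℕ+ => ∏ i, f (κ i))]
        exact tsum_congr hcomp
      have hnf : Summable fun m => ‖f m‖ := by
        simp only [Real.norm_eq_abs]
        exact hf.congr fun m => (abs_of_nonneg (hf0 _)).symm
      have hnF : Summable fun κ : Fin n → ℕ+ => ‖∏ i, f (κ i)‖ := by
        simp only [Real.norm_eq_abs]
        exact ihs.congr fun κ =>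
          (abs_of_nonneg (Finset.prod_nonneg fun i _ => hf0 _)).symm
      rw [h1, ← tsum_mul_tsum_of_summable_norm hnf hnF, iht, pow_succ]
      ring

/-- Let `L ≥ 2` and `(α_m)_{m≥0}` be nonnegative reals with
`∑_m α_m = 1` and `0 < ᾱ = ∑_{m≥1} m α_m < ∞`, and define, for `k ≥ 1`,
`u_k = k ∑_{k_2,…,k_L ≥ 1} min(1/k, 1/k_2, …, 1/k_L) ∏_{i=2}^L k_i α_{k_i}`.
Then `(u_k)_{k≥1}` is nondecreasing, `u_k ≤ ᾱ^{L−1}` for all `k ≥ 1`, and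
`lim_{k→∞} u_k = ᾱ^{L−1}`. -/
theorem statement_14 (L : ℕ) (hL : 2 ≤ L) (α : ℕ → ℝ) (hα : ∀ m, 0 ≤ α m)
    (hsum : Summable α) (hsum1 : ∑' m, α m = 1)
    (hms : Summable (fun m : ℕ => (m : ℝ) * α m)) (habar : 0 < ∑' m : ℕ, (m : ℝ) * α m)
    (u : ℕ → ℝ)
    (hu : ∀ k, 1 ≤ k → u k = (k : ℝ) * ∑' κ : Fin (L - 1) → ℕ+,
      (min (1 / (k : ℝ))
          (Finset.univ.inf' ⟨(⟨0, by omega⟩ : Fin (L - 1)), Finset.mem_univ _⟩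
            (fun i => 1 / ((κ i : ℕ) : ℝ)))) *
        ∏ i, ((κ i : ℕ) : ℝ) * α (κ i : ℕ)) :
    (∀ k, 1 ≤ k → u k ≤ u (k + 1)) ∧
    (∀ k, 1 ≤ k → u k ≤ (∑' m : ℕ, (m : ℝ) * α m) ^ (L - 1)) ∧
    Filter.Tendsto u Filter.atTop (nhds ((∑' m : ℕ, (m : ℝ) * α m) ^ (L - 1))) := by
  have hn : 0 < L - 1 := by omega
  set S := ∑' m : ℕ, (m : ℝ) * α m with hSdef
  set f : ℕ+ → ℝ := fun m => ((m : ℕ) : ℝ) * α m with hfdef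
  have hf0 : ∀ m : ℕ+, 0 ≤ f m := fun m => mul_nonneg (by positivity) (hα _)
  have hrange : ∀ x ∉ Set.range PNat.val, (x : ℝ) * α x = 0 := by
    intro x hx
    have hx0 : x = 0 := by
      by_contra h
      exact hx ⟨⟨x, Nat.pos_of_ne_zero h⟩, rfl⟩
    simp [hx0]
  have hfsum : Summable f := (PNat.coe_injective.summable_iff hrange).mpr hms
  have hfS : ∑' m : ℕ+, f m = S := by
    rw [hSdef, hfdef]
    refine Function.Injective.tsum_eq (f := fun x : ℕ => (x : ℝ) * α x)
      (g := PNat.val) PNat.coe_injective ?_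
    intro x hx
    rcases Nat.eq_zero_or_pos x with h0 | h0
    · exact absurd (by simp [h0] : (x : ℝ) * α x = 0) hx
    · exact ⟨⟨x, h0⟩, rfl⟩
  obtain ⟨hFsum, hFt⟩ := aux_prod_tsum hf0 hfsum (L - 1)
  set F : (Fin (L - 1) → ℕ+) → ℝ := fun κ => ∏ i, f (κ i) with hFdef
  have hF0 : ∀ κ, 0 ≤ F κ := fun κ => Finset.prod_nonneg fun i _ => hf0 _
  have hFS : ∑' κ, F κ = S ^ (L - 1) := by rw [hFt, hfS]
  have hne : (Finset.univ : Finset (Fin (L - 1))).Nonempty :=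
    ⟨⟨0, hn⟩, Finset.mem_univ _⟩
  set M : (Fin (L - 1) → ℕ+) → ℝ :=
    fun κ => Finset.univ.inf' hne fun i => 1 / ((κ i : ℕ) : ℝ) with hMdef
  have hM : ∀ κ, 0 < M κ := by
    intro κ
    rw [hMdef, Finset.lt_inf'_iff]
    intro i _
    have : (0 : ℝ) < ((κ i : ℕ) : ℝ) := by exact_mod_cast (κ i).pos
    positivity
  set c : ℕ → (Fin (L - 1) → ℕ+) → ℝ := fun k κ => min 1 ((k : ℝ) * M κ) with hcdef
  have hc0 : ∀ k κ, 0 ≤ c k κ := by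
    intro k κ
    exact le_min zero_le_one (mul_nonneg (Nat.cast_nonneg k) (hM κ).le)
  have hc1 : ∀ k κ, c k κ ≤ 1 := fun k κ => min_le_left _ _
  have key : ∀ k : ℕ, 1 ≤ k → u k = ∑' κ, c k κ * F κ := by
    intro k hk
    rw [hu k hk, ← tsum_mul_left]
    refine tsum_congr fun κ => ?_
    have hk0 : (0 : ℝ) < (k : ℝ) := by exact_mod_cast hk
    rw [← mul_assoc, mul_min_of_nonneg _ _ hk0.le, mul_one_div_cancel hk0.ne']
  have hsummand : ∀ k, Summable (fun κ => c k κ * F κ) := by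
    intro k
    refine hFsum.of_nonneg_of_le (fun κ => mul_nonneg (hc0 k κ) (hF0 κ)) ?_
    exact fun κ => mul_le_of_le_one_left (hF0 κ) (hc1 k κ)
  refine ⟨?_, ?_, ?_⟩
  · intro k hk
    rw [key k hk, key (k + 1) (by omega)]
    refine Summable.tsum_le_tsum (fun κ => ?_) (hsummand k) (hsummand (k + 1))
    refine mul_le_mul_of_nonneg_right (min_le_min le_rfl ?_) (hF0 κ)
    refine mul_le_mul_of_nonneg_right ?_ (hM κ).le
    push_cast; linarith
  · intro k hk
    rw [key k hk, ← hFS]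
    refine Summable.tsum_le_tsum (fun κ => ?_) (hsummand k) hFsum
    exact mul_le_of_le_one_left (hF0 κ) (hc1 k κ)
  · have h3 : Tendsto (fun k : ℕ => ∑' κ, c k κ * F κ) atTop (𝓝 (∑' κ, F κ)) := by
      refine tendsto_tsum_of_dominated_convergence hFsum (fun κ => ?_) ?_
      · obtain ⟨N, hN⟩ := exists_nat_ge (1 / M κ)
        refine Tendsto.congr' ?_ tendsto_const_nhds
        filter_upwards [eventually_ge_atTop N] with k hk
        have h1 : (1 : ℝ) ≤ (k : ℝ) * M κ := by
          rw [div_le_iff₀ (hM κ)] at hN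
          calc (1 : ℝ) ≤ (N : ℝ) * M κ := hN
            _ ≤ (k : ℝ) * M κ := by
                refine mul_le_mul_of_nonneg_right ?_ (hM κ).le
                exact_mod_cast hk
        rw [hcdef]
        simp only [min_eq_left h1, one_mul]
      · filter_upwards with k
        intro κ
        rw [Real.norm_eq_abs, abs_of_nonneg (mul_nonneg (hc0 k κ) (hF0 κ))]
        exact mul_le_of_le_one_left (hF0 κ) (hc1 k κ)
    rw [← hFS]
    refine h3.congr' ?_
    filter_upwards [eventually_ge_atTop 1] with k hk using (key k hk).symm
end

section
/- Let c and v be real functions on (0, ∞), with v three times differentiable and c differentiable, satisfying z c'(z) + c(z) v(z) = 0 and z v''(z) + v'(z) = c(z) for all z > 0. Define w : ℝ → ℝ by w(y) := v(e^y) − 1. Then w satisfies the Blasius equation w'''(y) + w(y) w''(y) = 0 for all y ∈ ℝ. (The paper states this with v(e^y) + 1; the sign −1 is the one making the identity hold for solutions of the stated system.) -/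
/-- Let `c` and `v` be real functions on `(0, ∞)`, with `v` three
times differentiable and `c` differentiable, satisfying `z c'(z) + c(z) v(z) = 0`
and `z v''(z) + v'(z) = c(z)` for all `z > 0`. Define `w(y) = v(e^y) − 1`. Then `w`
satisfies the Blasius equation `w'''(y) + w(y) w''(y) = 0` for all `y ∈ ℝ`.
(The paper states this with `v(e^y) + 1`; the sign `−1` is the one making the
identity hold for solutions of the stated system.) -/
theorem statement_18 (c v : ℝ → ℝ)
    (hv1 : ∀ z > (0 : ℝ), DifferentiableAt ℝ v z)
    (hv2 : ∀ z > (0 : ℝ), DifferentiableAt ℝ (deriv v) z)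
    (hv3 : ∀ z > (0 : ℝ), DifferentiableAt ℝ (deriv (deriv v)) z)
    (hc : ∀ z > (0 : ℝ), DifferentiableAt ℝ c z)
    (heq1 : ∀ z > (0 : ℝ), z * deriv c z + c z * v z = 0)
    (heq2 : ∀ z > (0 : ℝ), z * deriv (deriv v) z + deriv v z = c z) :
    ∀ y : ℝ,
      deriv (deriv (deriv (fun t => v (Real.exp t) - 1))) y +
        (v (Real.exp y) - 1) * deriv (deriv (fun t => v (Real.exp t) - 1)) y = 0 := by
  intro y
  have hE : ∀ t : ℝ, (0 : ℝ) < Real.exp t := fun t => Real.exp_pos t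
  -- first derivative
  have h1 : ∀ t : ℝ, HasDerivAt (fun s => v (Real.exp s) - 1)
      (Real.exp t * deriv v (Real.exp t)) t := by
    intro t
    have := ((hv1 _ (hE t)).hasDerivAt.comp t (Real.hasDerivAt_exp t)).sub_const 1
    simpa [mul_comm] using this
  have hd1 : deriv (fun s => v (Real.exp s) - 1)
      = fun t => Real.exp t * deriv v (Real.exp t) :=
    funext fun t => (h1 t).deriv
  -- second derivative
  have h2 : ∀ t : ℝ, HasDerivAt (fun s => Real.exp s * deriv v (Real.exp s))
      (Real.exp t * c (Real.exp t)) t := by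
    intro t
    have hdv : HasDerivAt (fun s => deriv v (Real.exp s))
        (deriv (deriv v) (Real.exp t) * Real.exp t) t :=
      (hv2 _ (hE t)).hasDerivAt.comp t (Real.hasDerivAt_exp t)
    have hp := (Real.hasDerivAt_exp t).mul hdv
    have key := heq2 (Real.exp t) (hE t)
    refine HasDerivAt.congr_deriv hp (Eq.symm ?_)
    linear_combination (-Real.exp t) * key
  have hd2 : deriv (fun t => Real.exp t * deriv v (Real.exp t))
      = fun t => Real.exp t * c (Real.exp t) :=
    funext fun t => (h2 t).deriv
  -- third derivative
  have h3 : HasDerivAt (fun s => Real.exp s * c (Real.exp s))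
      (Real.exp y * c (Real.exp y) + Real.exp y * (deriv c (Real.exp y) * Real.exp y)) y := by
    have hdc : HasDerivAt (fun s => c (Real.exp s))
        (deriv c (Real.exp y) * Real.exp y) y :=
      (hc _ (hE y)).hasDerivAt.comp y (Real.hasDerivAt_exp y)
    exact (Real.hasDerivAt_exp y).mul hdc
  rw [hd1, hd2, h3.deriv]
  have key := heq1 (Real.exp y) (hE y)
  beta_reduce
  linear_combination Real.exp y * key
end
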